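/- The function g : ℝ → ℝ defined by g(y) = e^y/(e^y − 1) − 1/y for y ≠ 0 and g(0) = 1/2 is strictly increasing on ℝ. -/

import Mathlib

/-- The function `g(y) = e^y/(e^y − 1) − 1/y` extended by `g(0) = 1/2`. -/
noncomputable def gfun (y : ℝ) : ℝ :=
  if y = 0 then 1 / 2 else Real.exp y / (Real.exp y - 1) - 1 / y

open Real Set

lemma exp_gt_one {y : ℝ} (hy : 0 < y) : 1 < Real.exp y := by
  simpa using Real.exp_lt_exp.mpr hy

/-- Key inequality: `y * e^{y/2} < e^y - 1` for `y > 0`. -/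
lemma key_ineq {y : ℝ} (hy : 0 < y) : y * Real.exp (y / 2) < Real.exp y - 1 := by
  have h := Real.self_lt_sinh_iff.mpr (by linarith : (0:ℝ) < y / 2)
  rw [Real.sinh_eq] at h
  have hs : 0 < Real.exp (y / 2) := Real.exp_pos _
  have h2 : y < Real.exp (y / 2) - Real.exp (-(y / 2)) := by linarith
  have h3 : y * Real.exp (y / 2) < (Real.exp (y / 2) - Real.exp (-(y / 2))) * Real.exp (y / 2) :=
    mul_lt_mul_of_pos_right h2 hs
  calc y * Real.exp (y / 2) < (Real.exp (y / 2) - Real.exp (-(y / 2))) * Real.exp (y / 2) := h3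
    _ = Real.exp y - 1 := by
        rw [sub_mul, ← Real.exp_add, ← Real.exp_add]; ring_nf; rw [Real.exp_zero]; ring

/-- The "raw" function on positive reals. -/
noncomputable def fraw (y : ℝ) : ℝ := Real.exp y / (Real.exp y - 1) - 1 / y

lemma fraw_hasDerivAt {y : ℝ} (hy : y ≠ 0) (hE : Real.exp y ≠ 1) :
    HasDerivAt fraw (-Real.exp y / (Real.exp y - 1) ^ 2 + 1 / y ^ 2) y := by
  have hEne : Real.exp y - 1 ≠ 0 := sub_ne_zero.mpr hE
  have h1 : HasDerivAt (fun x => Real.exp x / (Real.exp x - 1))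
      ((Real.exp y * (Real.exp y - 1) - Real.exp y * Real.exp y) / (Real.exp y - 1) ^ 2) y :=
    (Real.hasDerivAt_exp y).div ((Real.hasDerivAt_exp y).sub_const 1) hEne
  have h2 : HasDerivAt (fun x : ℝ => 1 / x) (-(y ^ 2)⁻¹) y := by
    simpa [one_div] using hasDerivAt_inv hy
  have := h1.sub h2
  exact this.congr_deriv (by ring)

lemma fraw_strictMonoOn : StrictMonoOn fraw (Ioi (0:ℝ)) := by
  have hderiv : ∀ y ∈ Ioi (0:ℝ), HasDerivAt fraw
      (-Real.exp y / (Real.exp y - 1) ^ 2 + 1 / y ^ 2) y := fun y hy =>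
    fraw_hasDerivAt (ne_of_gt hy) (ne_of_gt (exp_gt_one hy))
  have hdiff : DifferentiableOn ℝ fraw (Ioi (0:ℝ)) := fun y hy =>
    ((hderiv y hy).differentiableAt).differentiableWithinAt
  apply strictMonoOn_of_deriv_pos (convex_Ioi 0) hdiff.continuousOn
  intro y hy
  rw [interior_Ioi] at hy
  rw [(hderiv y hy).deriv]
  have hE : 1 < Real.exp y := exp_gt_one hy
  have hk := key_ineq hy
  have hs : Real.exp (y / 2) * Real.exp (y / 2) = Real.exp y := by
    rw [← Real.exp_add]; ring_nf
  have hys : 0 < y * Real.exp (y / 2) := mul_pos hy (Real.exp_pos _)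
  have hsq : Real.exp y * y ^ 2 < (Real.exp y - 1) ^ 2 := by nlinarith
  have h1 : Real.exp y / (Real.exp y - 1) ^ 2 < 1 / y ^ 2 := by
    rw [div_lt_div_iff₀ (pow_pos (by linarith : (0:ℝ) < Real.exp y - 1) 2)
      (pow_pos (mem_Ioi.mp hy) 2)]
    nlinarith
  have hne : -Real.exp y / (Real.exp y - 1) ^ 2 = -(Real.exp y / (Real.exp y - 1) ^ 2) :=
    neg_div _ _
  linarith

/-- Auxiliary: `(y-2)e^y + y + 2 > 0` for `y > 0`. -/
lemma hfun_pos {y : ℝ} (hy : 0 < y) : 0 < (y - 2) * Real.exp y + y + 2 := by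
  set h : ℝ → ℝ := fun y => (y - 2) * Real.exp y + y + 2 with hh
  have hderiv : ∀ x : ℝ, HasDerivAt h ((x - 1) * Real.exp x + 1) x := by
    intro x
    have h1 : HasDerivAt (fun x : ℝ => (x - 2) * Real.exp x)
        (1 * Real.exp x + (x - 2) * Real.exp x) x :=
      ((hasDerivAt_id x).sub_const 2).mul (Real.hasDerivAt_exp x)
    have := (h1.add_const 0).add (hasDerivAt_id x)
    have h2 : HasDerivAt h (1 * Real.exp x + (x - 2) * Real.exp x + 1) x := by
      have := h1.add ((hasDerivAt_id x).add_const 2)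
      have hfun : h = (fun x : ℝ => (x - 2) * Real.exp x) + (fun x : ℝ => x + 2) := by
        ext z
        simp only [hh, Pi.add_apply]
        ring
      rw [hfun]
      exact this
    convert h2 using 1; ring
  have hmono : StrictMonoOn h (Ici (0:ℝ)) := by
    apply strictMonoOn_of_deriv_pos (convex_Ici 0)
      (fun x _ => ((hderiv x).differentiableAt).continuousAt.continuousWithinAt)
    intro x hx
    rw [interior_Ici] at hx
    rw [(hderiv x).deriv]
    rcases le_or_gt 1 x with h1 | h1
    · have : 0 ≤ (x - 1) * Real.exp x := mul_nonneg (by linarith) (Real.exp_pos x).le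
      linarith
    · -- 0 < x < 1 : use e^{-x} > 1 - x
      rw [mem_Ioi] at hx
      have := Real.add_one_lt_exp (show -x ≠ 0 by intro h; simp at h; linarith)
      have hex : 0 < Real.exp x := Real.exp_pos x
      have hinv : Real.exp (-x) * Real.exp x = 1 := by
        rw [← Real.exp_add]; simp
      nlinarith
  have h0 : h 0 = 0 := by simp [hh]
  have := hmono (le_refl (0:ℝ)) (le_of_lt hy) hy
  rw [h0] at this
  simpa [hh] using this

lemma gfun_half_lt {y : ℝ} (hy : 0 < y) : 1 / 2 < gfun y := by
  rw [gfun, if_neg (ne_of_gt hy)]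
  have hE : 1 < Real.exp y := exp_gt_one hy
  have hd : 0 < (Real.exp y - 1) * y := mul_pos (by linarith) hy
  rw [div_sub_div _ _ (by linarith : Real.exp y - 1 ≠ 0) (ne_of_gt hy),
    lt_div_iff₀ hd]
  have := hfun_pos hy
  nlinarith

lemma gfun_neg (y : ℝ) : gfun (-y) = 1 - gfun y := by
  rcases eq_or_ne y 0 with h | h
  · simp [h, gfun]; norm_num
  · have hE : Real.exp y ≠ 1 := fun hc =>
      h (Real.exp_eq_exp.mp (by rw [hc, Real.exp_zero]))
    rw [gfun, gfun, if_neg (neg_ne_zero.mpr h), if_neg h, Real.exp_neg]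
    have hE0 : Real.exp y ≠ 0 := Real.exp_ne_zero y
    have h1 : (Real.exp y)⁻¹ - 1 ≠ 0 := by
      rw [sub_ne_zero]
      intro hc
      exact hE (by field_simp at hc; linarith)
    have h2 : Real.exp y - 1 ≠ 0 := sub_ne_zero.mpr hE
    have h3 : 1 - Real.exp y ≠ 0 := fun hc => hE (by linarith [sub_eq_zero.mp hc])
    field_simp [h]
    ring
  
lemma gfun_strictMonoOn : StrictMonoOn gfun (Ioi (0:ℝ)) := by
  apply fraw_strictMonoOn.congr
  intro y hy
  rw [gfun, if_neg (ne_of_gt hy)]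
  rfl

/-- `g` is strictly increasing on `ℝ`. -/
theorem stmt5 : StrictMono gfun := by
  intro a b hab
  have g0 : gfun 0 = 1 / 2 := by simp [gfun]
  rcases lt_trichotomy a 0 with ha | ha | ha
  · have ha' : gfun a < 1 / 2 := by
      have := gfun_half_lt (show 0 < -a by linarith)
      have hsym := gfun_neg (-a)
      rw [neg_neg] at hsym
      linarith
    rcases lt_trichotomy b 0 with hb | hb | hb
    · have hsa := gfun_neg (-a); rw [neg_neg] at hsa
      have hsb := gfun_neg (-b); rw [neg_neg] at hsb
      have := gfun_strictMonoOn (show -b ∈ Ioi (0:ℝ) by simpa using by linarith)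
        (show -a ∈ Ioi (0:ℝ) by simpa using by linarith) (by linarith)
      linarith
    · rw [hb, g0]; exact ha'
    · have := gfun_half_lt hb; linarith
  · rw [ha, g0]
    exact gfun_half_lt (ha ▸ hab)
  · exact gfun_strictMonoOn (mem_Ioi.mpr ha) (mem_Ioi.mpr (lt_trans ha hab)) hab
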